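/- arXiv:2310.18725 — 3 statements merged into one kernel-verified Lean document; each statement's English description precedes it below -/
import Mathlib

section
/- Let f : ℝ → ℝ be computed by a fully-connected ReLU network with one-dimensional input and output and total number of hidden neurons p. Then the set Φ of points where f fails to be differentiable is finite, of cardinality at most 2^p − 1, and f is affine on every interval disjoint from Φ (in particular, on each connected component of ℝ \ Φ). -/
/-- The coordinatewise ReLU map on `ℝᵏ`. -/
def reluMap (k : ℕ) (y : EuclideanSpace ℝ (Fin k)) : EuclideanSpace ℝ (Fin k) :=
  WithLp.toLp 2 (fun i => max 0 (y i))

/-- `IsReLUNetTail1 hidden k g` says that `g : ℝᵏ → ℝ` is computed by the tail of a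
ReLU network (affine layers interleaved with ReLUs, hidden widths `hidden`,
one-dimensional output). -/
def IsReLUNetTail1 : List ℕ → ∀ k : ℕ, (EuclideanSpace ℝ (Fin k) → ℝ) → Prop
  | [], k, g => ∃ A : EuclideanSpace ℝ (Fin k) →ᵃ[ℝ] ℝ, g = ⇑A
  | j :: rest, k, g =>
      ∃ (A : EuclideanSpace ℝ (Fin k) →ᵃ[ℝ] EuclideanSpace ℝ (Fin j))
        (h : EuclideanSpace ℝ (Fin j) → ℝ),
        IsReLUNetTail1 rest j h ∧ g = fun x => h (reluMap j (A x))

/-- `IsReLUNet1 hidden f` says that `f : ℝ → ℝ` is computed by a fully-connected ReLU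
network with one-dimensional input and output and hidden layer widths `hidden`. -/
def IsReLUNet1 (hidden : List ℕ) (f : ℝ → ℝ) : Prop :=
  match hidden with
  | [] => ∃ A : ℝ →ᵃ[ℝ] ℝ, f = ⇑A
  | k :: rest =>
      ∃ (A : ℝ →ᵃ[ℝ] EuclideanSpace ℝ (Fin k)) (g : EuclideanSpace ℝ (Fin k) → ℝ),
        IsReLUNetTail1 rest k g ∧ f = fun x => g (reluMap k (A x))


open Set

section Helpers

lemma affine_apply (g : ℝ →ᵃ[ℝ] ℝ) (x : ℝ) : g x = g.linear 1 * x + g 0 := by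
  have h := g.map_vadd (0:ℝ) x
  have h2 : g.linear x = x * g.linear 1 := by
    have := g.linear.map_smul x 1
    simpa [smul_eq_mul] using this
  simp only [vadd_eq_add, add_zero] at h
  rw [h, h2]; ring

lemma affine_hasDerivAt (g : ℝ →ᵃ[ℝ] ℝ) (x : ℝ) : HasDerivAt g (g.linear 1) x := by
  have h : (⇑g : ℝ → ℝ) = fun y => g.linear 1 * y + g 0 := funext fun y => affine_apply g y
  rw [h]
  simpa using ((hasDerivAt_id x).const_mul (g.linear 1)).add_const (g 0)

lemma ordconn_side {s : Set ℝ} (hs : s.OrdConnected) {b : ℝ} (hb : b ∉ s) :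
    s ⊆ Set.Iio b ∨ s ⊆ Set.Ioi b := by
  by_cases h : ∀ x ∈ s, x < b
  · exact Or.inl h
  · push_neg at h
    obtain ⟨y, hy, hyb⟩ := h
    right
    intro x hx
    by_contra hxb
    simp only [Set.mem_Ioi, not_lt] at hxb
    exact hb (hs.out hx hy ⟨hxb, hyb⟩)

noncomputable def projA (k : ℕ) (i : Fin k) : EuclideanSpace ℝ (Fin k) →ᵃ[ℝ] ℝ where
  toFun v := v i
  linear := { toFun := fun v => v i, map_add' := fun _ _ => rfl, map_smul' := fun _ _ => rfl }
  map_vadd' _ _ := rfl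

noncomputable def piA (k : ℕ) (g : Fin k → (ℝ →ᵃ[ℝ] ℝ)) : ℝ →ᵃ[ℝ] EuclideanSpace ℝ (Fin k) where
  toFun x := WithLp.toLp 2 (fun i => g i x)
  linear := { toFun := fun x => WithLp.toLp 2 (fun i => (g i).linear x),
              map_add' := fun a b => by ext i; simp,
              map_smul' := fun c a => by
                ext i
                simpa [smul_eq_mul] using (g i).linear.map_smul c a }
  map_vadd' p v := by ext i; exact (g i).map_vadd' p v

end Helpers

/-- `u` is affine on every ord-connected set avoiding `Φ`. -/
def PW (Φ : Set ℝ) (u : ℝ → ℝ) : Prop :=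
  ∀ s : Set ℝ, s.OrdConnected → Disjoint s Φ → ∃ g : ℝ →ᵃ[ℝ] ℝ, Set.EqOn u ⇑g s

/-- relativized version. -/
def PWOn (t Φ : Set ℝ) (u : ℝ → ℝ) : Prop :=
  ∀ s : Set ℝ, s ⊆ t → s.OrdConnected → Disjoint s Φ → ∃ g : ℝ →ᵃ[ℝ] ℝ, Set.EqOn u ⇑g s

/-- vector-valued version. -/
def PWc (Φ : Set ℝ) (k : ℕ) (c : ℝ → EuclideanSpace ℝ (Fin k)) : Prop :=
  ∀ s : Set ℝ, s.OrdConnected → Disjoint s Φ →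
    ∃ G : ℝ →ᵃ[ℝ] EuclideanSpace ℝ (Fin k), Set.EqOn c ⇑G s

lemma relu_affine (g : ℝ →ᵃ[ℝ] ℝ) :
    ∃ Ψ : Set ℝ, Ψ.Finite ∧ Ψ.ncard ≤ 1 ∧
      ∀ s : Set ℝ, s.OrdConnected → Disjoint s Ψ →
        ∃ h : ℝ →ᵃ[ℝ] ℝ, Set.EqOn (fun x => max 0 (g x)) ⇑h s := by
  set m := g.linear 1 with hm
  by_cases h0 : m = 0
  · refine ⟨∅, finite_empty, by simp, fun s _ _ => ?_⟩
    refine ⟨AffineMap.const ℝ ℝ (max 0 (g 0)), fun x _ => ?_⟩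
    have hgx : g x = g 0 := by rw [affine_apply, ← hm, h0]; ring
    simp [hgx]
  · set z := -(g 0) / m with hzdef
    have hz : g z = 0 := by
      rw [affine_apply, ← hm, hzdef]
      field_simp
      ring
    refine ⟨{z}, finite_singleton z, by simp, fun s hs hds => ?_⟩
    have hzs : z ∉ s := fun h => (Set.disjoint_left.mp hds h) rfl
    have key : ∀ x, g x = m * x - m * z := by
      intro x
      have e1 := affine_apply g x
      have e2 := affine_apply g z
      rw [hz] at e2
      rw [← hm] at e1 e2
      linarith
    rcases ordconn_side hs hzs with hside | hside
    · rcases lt_or_gt_of_ne h0 with hneg | hpos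
      · refine ⟨g, fun x hx => ?_⟩
        have hxz : x < z := hside hx
        have : 0 ≤ g x := by rw [key x]; nlinarith
        simp [max_eq_right this]
      · refine ⟨AffineMap.const ℝ ℝ 0, fun x hx => ?_⟩
        have hxz : x < z := hside hx
        have : g x ≤ 0 := by rw [key x]; nlinarith
        simp [max_eq_left this]
    · rcases lt_or_gt_of_ne h0 with hneg | hpos
      · refine ⟨AffineMap.const ℝ ℝ 0, fun x hx => ?_⟩
        have hxz : z < x := hside hx
        have : g x ≤ 0 := by rw [key x]; nlinarith
        simp [max_eq_left this]
      · refine ⟨g, fun x hx => ?_⟩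
        have hxz : z < x := hside hx
        have : 0 ≤ g x := by rw [key x]; nlinarith
        simp [max_eq_right this]

lemma relu_step_base (Φ t : Set ℝ) (u : ℝ → ℝ) (ht : t.OrdConnected)
    (hempty : Φ ∩ t = ∅) (hu : PWOn t Φ u) :
    ∃ Ψ : Set ℝ, Ψ.Finite ∧ Ψ.ncard ≤ 1 ∧ PWOn t (Φ ∪ Ψ) (fun x => max 0 (u x)) := by
  have hdisj : Disjoint t Φ := (Set.disjoint_iff_inter_eq_empty.mpr hempty).symm
  obtain ⟨g, hg⟩ := hu t (subset_refl t) ht hdisj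
  obtain ⟨Ψ, hfin, hcard, hΨ⟩ := relu_affine g
  refine ⟨Ψ, hfin, hcard, fun s hst hs hds => ?_⟩
  obtain ⟨h, hh⟩ := hΨ s hs (hds.mono_right Set.subset_union_right)
  refine ⟨h, fun x hx => ?_⟩
  have h1 : max 0 (u x) = max 0 (g x) := by rw [hg (hst hx)]
  show max 0 (u x) = h x
  rw [h1]; exact hh hx

lemma relu_step : ∀ (n : ℕ) (Φ t : Set ℝ) (u : ℝ → ℝ), Φ.Finite → t.OrdConnected →
    (Φ ∩ t).ncard ≤ n → PWOn t Φ u →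
    ∃ Ψ : Set ℝ, Ψ.Finite ∧ Ψ.ncard ≤ (Φ ∩ t).ncard + 1 ∧
      PWOn t (Φ ∪ Ψ) (fun x => max 0 (u x)) := by
  intro n
  induction n with
  | zero =>
    intro Φ t u hΦ ht hn hu
    have hempty : Φ ∩ t = ∅ := by
      have := (Set.ncard_eq_zero (hΦ.inter_of_left t)).mp (Nat.le_zero.mp hn)
      exact this
    obtain ⟨Ψ, h1, h2, h3⟩ := relu_step_base Φ t u ht hempty hu
    exact ⟨Ψ, h1, by omega, h3⟩
  | succ n ih =>
    intro Φ t u hΦ ht hn hu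
    rcases Set.eq_empty_or_nonempty (Φ ∩ t) with hem | ⟨b, hb⟩
    · obtain ⟨Ψ, h1, h2, h3⟩ := relu_step_base Φ t u ht hem hu
      exact ⟨Ψ, h1, by omega, h3⟩
    · by_cases hle : (Φ ∩ t).ncard ≤ n
      · exact ih Φ t u hΦ ht hle hu
      · have hT : (Φ ∩ t).Finite := hΦ.inter_of_left t
        have hcard : (Φ ∩ t).ncard = n + 1 := le_antisymm hn (by omega)
        set t₁ := t ∩ Set.Iio b with ht₁
        set t₂ := t ∩ Set.Ioi b with ht₂
        have e₁ : Φ ∩ t₁ = (Φ ∩ t) ∩ Set.Iio b := by rw [ht₁, Set.inter_assoc]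
        have e₂ : Φ ∩ t₂ = (Φ ∩ t) ∩ Set.Ioi b := by rw [ht₂, Set.inter_assoc]
        have hsplit : (Φ ∩ t) \ {b} = ((Φ ∩ t) ∩ Set.Iio b) ∪ ((Φ ∩ t) ∩ Set.Ioi b) := by
          ext x
          simp only [Set.mem_diff, Set.mem_singleton_iff, Set.mem_union, Set.mem_inter_iff,
            Set.mem_Iio, Set.mem_Ioi]
          constructor
          · rintro ⟨hx, hxb⟩
            rcases lt_trichotomy x b with h | h | h
            · exact Or.inl ⟨hx, h⟩
            · exact absurd h hxb
            · exact Or.inr ⟨hx, h⟩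
          · rintro (⟨hx, h⟩ | ⟨hx, h⟩) <;> exact ⟨hx, by intro he; subst he; exact lt_irrefl _ h⟩
        have hdisj12 : Disjoint ((Φ ∩ t) ∩ Set.Iio b) ((Φ ∩ t) ∩ Set.Ioi b) := by
          apply Set.disjoint_left.mpr
          rintro x ⟨_, hx1⟩ ⟨_, hx2⟩
          exact absurd (lt_trans hx1 hx2) (lt_irrefl x)
        have hcount : ((Φ ∩ t) ∩ Set.Iio b).ncard + ((Φ ∩ t) ∩ Set.Ioi b).ncard + 1 = n + 1 := by
          have h1 : ((Φ ∩ t) \ {b}).ncard + 1 = (Φ ∩ t).ncard :=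
            Set.ncard_diff_singleton_add_one hb hT
          rw [hsplit] at h1
          rw [Set.ncard_union_eq hdisj12 (hT.inter_of_left _) (hT.inter_of_left _)] at h1
          omega
        have hrec : ∀ t' : Set ℝ, t' ⊆ t → t'.OrdConnected → (Φ ∩ t').ncard ≤ n →
            ∃ Ψ : Set ℝ, Ψ.Finite ∧ Ψ.ncard ≤ (Φ ∩ t').ncard + 1 ∧
              PWOn t' (Φ ∪ Ψ) (fun x => max 0 (u x)) := by
          intro t' hsub hconn hcn
          exact ih Φ t' u hΦ hconn hcn (fun s hs1 hs2 hs3 => hu s (hs1.trans hsub) hs2 hs3)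
        obtain ⟨Ψ₁, hΨ₁fin, hΨ₁card, hΨ₁⟩ := hrec t₁ Set.inter_subset_left
          (ht.inter Set.ordConnected_Iio) (by rw [e₁]; omega)
        obtain ⟨Ψ₂, hΨ₂fin, hΨ₂card, hΨ₂⟩ := hrec t₂ Set.inter_subset_left
          (ht.inter Set.ordConnected_Ioi) (by rw [e₂]; omega)
        refine ⟨Ψ₁ ∪ Ψ₂, hΨ₁fin.union hΨ₂fin, ?_, ?_⟩
        · have := Set.ncard_union_le Ψ₁ Ψ₂
          rw [e₁] at hΨ₁card
          rw [e₂] at hΨ₂card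
          omega
        · intro s hst hs hds
          have hbs : b ∉ s := fun hbs =>
            Set.disjoint_left.mp hds hbs (Set.mem_union_left _ hb.1)
          rcases ordconn_side hs hbs with hside | hside
          · exact hΨ₁ s (Set.subset_inter hst hside) hs
              (hds.mono_right (Set.union_subset_union_right Φ Set.subset_union_left))
          · exact hΨ₂ s (Set.subset_inter hst hside) hs
              (hds.mono_right (Set.union_subset_union_right Φ Set.subset_union_right))


lemma finite_iUnion_ncard {k : ℕ} (Ψ : Fin k → Set ℝ) (h : ∀ i, (Ψ i).Finite) :
    (⋃ i, Ψ i).Finite ∧ (⋃ i, Ψ i).ncard ≤ ∑ i, (Ψ i).ncard := by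
  have hfin : (⋃ i, Ψ i).Finite := Set.finite_iUnion h
  constructor
  · exact hfin
  · have heq : (⋃ i, Ψ i) = ↑(Finset.univ.biUnion fun i => (h i).toFinset) := by
      ext x; simp
    rw [heq, Set.ncard_coe_finset]
    calc (Finset.univ.biUnion fun i => (h i).toFinset).card
        ≤ ∑ i, ((h i).toFinset).card := Finset.card_biUnion_le
      _ = ∑ i, (Ψ i).ncard := by
          apply Finset.sum_congr rfl
          intro i _
          exact (Set.ncard_eq_toFinset_card (Ψ i) (h i)).symm

lemma relu_layer (k : ℕ) (c : ℝ → EuclideanSpace ℝ (Fin k)) (Φ : Set ℝ) (hΦ : Φ.Finite)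
    (hc : PWc Φ k c) :
    ∃ Φ' : Set ℝ, Φ'.Finite ∧ Φ'.ncard + 1 ≤ (Φ.ncard + 1) * 2 ^ k ∧
      PWc Φ' k (fun x => reluMap k (c x)) := by
  have hcoord : ∀ i : Fin k, PWOn Set.univ Φ (fun x => c x i) := by
    intro i s _ hs hds
    obtain ⟨G, hG⟩ := hc s hs hds
    refine ⟨(projA k i).comp G, fun x hx => ?_⟩
    show c x i = (projA k i) (G x)
    rw [hG hx]
    rfl
  have hstep := fun i : Fin k => relu_step Φ.ncard Φ Set.univ (fun x => c x i) hΦ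
    Set.ordConnected_univ (by rw [Set.inter_univ]) (hcoord i)
  choose Ψ hΨfin hΨcard hΨ using hstep
  obtain ⟨hUfin, hUcard⟩ := finite_iUnion_ncard Ψ hΨfin
  refine ⟨Φ ∪ ⋃ i, Ψ i, hΦ.union hUfin, ?_, ?_⟩
  · have h1 : (Φ ∪ ⋃ i, Ψ i).ncard ≤ Φ.ncard + (⋃ i, Ψ i).ncard := Set.ncard_union_le _ _
    have h2 : ∑ i, (Ψ i).ncard ≤ ∑ _i : Fin k, (Φ.ncard + 1) := by
      apply Finset.sum_le_sum
      intro i _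
      simpa [Set.inter_univ] using hΨcard i
    simp only [Finset.sum_const, Finset.card_univ, Fintype.card_fin, smul_eq_mul] at h2
    have h3 : k + 1 ≤ 2 ^ k := Nat.lt_two_pow_self
    have h4 : (Φ.ncard + 1) * (k + 1) ≤ (Φ.ncard + 1) * 2 ^ k := Nat.mul_le_mul_left _ h3
    nlinarith [h1, h2, hUcard, h4]
  · intro s hs hds
    have hpiece : ∀ i : Fin k, ∃ h : ℝ →ᵃ[ℝ] ℝ,
        Set.EqOn (fun x => max 0 (c x i)) ⇑h s := by
      intro i
      apply hΨ i s (Set.subset_univ s) hs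
      refine hds.mono_right ?_
      exact Set.union_subset Set.subset_union_left
        ((Set.subset_iUnion Ψ i).trans Set.subset_union_right)
    choose h hh using hpiece
    refine ⟨piA k h, fun x hx => ?_⟩
    show reluMap k (c x) = piA k h x
    ext i
    show max 0 (c x i) = h i x
    exact hh i hx


lemma tail_pw : ∀ (rest : List ℕ) (k : ℕ) (g : EuclideanSpace ℝ (Fin k) → ℝ),
    IsReLUNetTail1 rest k g → ∀ (c : ℝ → EuclideanSpace ℝ (Fin k)) (Φ : Set ℝ), Φ.Finite →
    PWc Φ k c → ∃ Φ' : Set ℝ, Φ'.Finite ∧ Φ'.ncard + 1 ≤ (Φ.ncard + 1) * 2 ^ rest.sum ∧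
      PW Φ' (fun x => g (c x)) := by
  intro rest
  induction rest with
  | nil =>
    intro k g hg c Φ hΦ hc
    obtain ⟨A, rfl⟩ := hg
    refine ⟨Φ, hΦ, by simp, fun s hs hds => ?_⟩
    obtain ⟨G, hG⟩ := hc s hs hds
    refine ⟨A.comp G, fun x hx => ?_⟩
    show A (c x) = A.comp G x
    rw [AffineMap.comp_apply, hG hx]
  | cons j rest ih =>
    intro k g hg c Φ hΦ hc
    obtain ⟨A, h, hh, rfl⟩ := hg
    have hAc : PWc Φ j (fun x => A (c x)) := by
      intro s hs hds
      obtain ⟨G, hG⟩ := hc s hs hds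
      refine ⟨A.comp G, fun x hx => ?_⟩
      show A (c x) = A.comp G x
      rw [AffineMap.comp_apply, hG hx]
    obtain ⟨Φ₁, h1fin, h1card, h1⟩ := relu_layer j _ Φ hΦ hAc
    obtain ⟨Φ', hfin, hcard, hPW⟩ := ih j h hh _ Φ₁ h1fin h1
    refine ⟨Φ', hfin, ?_, hPW⟩
    have hsum : (j :: rest).sum = j + rest.sum := by simp
    calc Φ'.ncard + 1 ≤ (Φ₁.ncard + 1) * 2 ^ rest.sum := hcard
      _ ≤ ((Φ.ncard + 1) * 2 ^ j) * 2 ^ rest.sum := Nat.mul_le_mul_right _ h1card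
      _ = (Φ.ncard + 1) * 2 ^ (j :: rest).sum := by rw [hsum, pow_add]; ring

lemma left_glue {f : ℝ → ℝ} {d : ℝ} (g : ℝ →ᵃ[ℝ] ℝ) {a b : ℝ} (hab : a < b)
    (heq : Set.EqOn f ⇑g (Set.Ico a b)) (hd : HasDerivAt f d b) :
    f b = g b ∧ g.linear 1 = d := by
  have hmem : Set.Ico a b ∈ nhdsWithin b (Set.Iio b) :=
    Ico_mem_nhdsLT_of_mem ⟨hab, le_refl b⟩
  have hev : f =ᶠ[nhdsWithin b (Set.Iio b)] ⇑g := Filter.eventually_of_mem hmem heq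
  have hval : f b = g b := by
    have h1 : Filter.Tendsto f (nhdsWithin b (Set.Iio b)) (nhds (f b)) :=
      (hd.continuousAt.continuousWithinAt : ContinuousWithinAt f (Set.Iio b) b)
    have h2 : Filter.Tendsto (⇑g) (nhdsWithin b (Set.Iio b)) (nhds (g b)) :=
      ((affine_hasDerivAt g b).continuousAt.continuousWithinAt :
        ContinuousWithinAt (⇑g) (Set.Iio b) b)
    have h3 : Filter.Tendsto (⇑g) (nhdsWithin b (Set.Iio b)) (nhds (f b)) :=
      h1.congr' hev
    exact tendsto_nhds_unique h3 h2
  refine ⟨hval, ?_⟩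
  have hfw : HasDerivWithinAt f d (Set.Iio b) b := hd.hasDerivWithinAt
  have hgw : HasDerivWithinAt (⇑g) d (Set.Iio b) b :=
    hfw.congr_of_eventuallyEq hev.symm hval.symm
  have hu := uniqueDiffWithinAt_Iio b
  have e1 := hgw.derivWithin hu
  have e2 := ((affine_hasDerivAt g b).hasDerivWithinAt).derivWithin hu
  rw [← e1, ← e2]

lemma right_glue {f : ℝ → ℝ} {d : ℝ} (g : ℝ →ᵃ[ℝ] ℝ) {b c : ℝ} (hbc : b < c)
    (heq : Set.EqOn f ⇑g (Set.Ioc b c)) (hd : HasDerivAt f d b) :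
    f b = g b ∧ g.linear 1 = d := by
  have hmem : Set.Ioc b c ∈ nhdsWithin b (Set.Ioi b) :=
    Ioc_mem_nhdsGT_of_mem ⟨le_refl b, hbc⟩
  have hev : f =ᶠ[nhdsWithin b (Set.Ioi b)] ⇑g := Filter.eventually_of_mem hmem heq
  have hval : f b = g b := by
    have h1 : Filter.Tendsto f (nhdsWithin b (Set.Ioi b)) (nhds (f b)) :=
      (hd.continuousAt.continuousWithinAt : ContinuousWithinAt f (Set.Ioi b) b)
    have h2 : Filter.Tendsto (⇑g) (nhdsWithin b (Set.Ioi b)) (nhds (g b)) :=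
      ((affine_hasDerivAt g b).continuousAt.continuousWithinAt :
        ContinuousWithinAt (⇑g) (Set.Ioi b) b)
    have h3 : Filter.Tendsto (⇑g) (nhdsWithin b (Set.Ioi b)) (nhds (f b)) :=
      h1.congr' hev
    exact tendsto_nhds_unique h3 h2
  refine ⟨hval, ?_⟩
  have hfw : HasDerivWithinAt f d (Set.Ioi b) b := hd.hasDerivWithinAt
  have hgw : HasDerivWithinAt (⇑g) d (Set.Ioi b) b :=
    hfw.congr_of_eventuallyEq hev.symm hval.symm
  have hu := uniqueDiffWithinAt_Ioi b
  have e1 := hgw.derivWithin hu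
  have e2 := ((affine_hasDerivAt g b).hasDerivWithinAt).derivWithin hu
  rw [← e1, ← e2]


lemma glue (f : ℝ → ℝ) : ∀ (n : ℕ) (Φ : Set ℝ), Φ.Finite → PW Φ f →
    ∀ s : Set ℝ, s.OrdConnected → (Φ ∩ s).ncard ≤ n →
    (∀ x ∈ s, DifferentiableAt ℝ f x) →
    ∃ g : ℝ →ᵃ[ℝ] ℝ, Set.EqOn f ⇑g s := by
  intro n
  induction n with
  | zero =>
    intro Φ hΦ hf s hs hn _
    have hempty : Φ ∩ s = ∅ :=
      (Set.ncard_eq_zero (hΦ.inter_of_left s)).mp (Nat.le_zero.mp hn)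
    exact hf s hs ((Set.disjoint_iff_inter_eq_empty.mpr (by rwa [Set.inter_comm])))
  | succ n ih =>
    intro Φ hΦ hf s hs hn hdiff
    rcases Set.eq_empty_or_nonempty (Φ ∩ s) with hem | ⟨b, hb⟩
    · exact hf s hs ((Set.disjoint_iff_inter_eq_empty.mpr (by rwa [Set.inter_comm])))
    · have hT : (Φ ∩ s).Finite := hΦ.inter_of_left s
      have hpos : 1 ≤ (Φ ∩ s).ncard := (Set.ncard_pos hT).mpr ⟨b, hb⟩
      set s₁ := s ∩ Set.Iio b with hs₁
      set s₂ := s ∩ Set.Ioi b with hs₂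
      have hsub₁ : Φ ∩ s₁ ⊆ (Φ ∩ s) \ {b} := by
        rintro x ⟨hx1, hx2, hx3⟩
        exact ⟨⟨hx1, hx2⟩, fun he => absurd (he ▸ hx3) (lt_irrefl b)⟩
      have hsub₂ : Φ ∩ s₂ ⊆ (Φ ∩ s) \ {b} := by
        rintro x ⟨hx1, hx2, hx3⟩
        refine ⟨⟨hx1, hx2⟩, fun he => ?_⟩
        rw [Set.mem_singleton_iff] at he
        subst he
        exact absurd hx3 (lt_irrefl x)
      have hdcard : ((Φ ∩ s) \ {b}).ncard ≤ n := by
        have h1 : ((Φ ∩ s) \ {b}).ncard = (Φ ∩ s).ncard - 1 :=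
          Set.ncard_diff_singleton_of_mem hb
        omega
      have hb₁ : (Φ ∩ s₁).ncard ≤ n :=
        le_trans (Set.ncard_le_ncard hsub₁ hT.diff) hdcard
      have hb₂ : (Φ ∩ s₂).ncard ≤ n :=
        le_trans (Set.ncard_le_ncard hsub₂ hT.diff) hdcard
      obtain ⟨g₁, hg₁⟩ := ih Φ hΦ hf s₁ (hs.inter Set.ordConnected_Iio) hb₁
        (fun x hx => hdiff x hx.1)
      obtain ⟨g₂, hg₂⟩ := ih Φ hΦ hf s₂ (hs.inter Set.ordConnected_Ioi) hb₂
        (fun x hx => hdiff x hx.1)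
      have hbs : b ∈ s := hb.2
      have hbd : DifferentiableAt ℝ f b := hdiff b hbs
      have hd : HasDerivAt f (deriv f b) b := hbd.hasDerivAt
      rcases Set.eq_empty_or_nonempty s₁ with h1e | ⟨a, ha⟩ <;>
        rcases Set.eq_empty_or_nonempty s₂ with h2e | ⟨c, hc⟩
      · -- s ⊆ {b}
        refine ⟨AffineMap.const ℝ ℝ (f b), fun x hx => ?_⟩
        have hxb : x = b := by
          rcases lt_trichotomy x b with h | h | h
          · exact absurd (show x ∈ s₁ from ⟨hx, h⟩) (h1e ▸ Set.notMem_empty x)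
          · exact h
          · exact absurd (show x ∈ s₂ from ⟨hx, h⟩) (h2e ▸ Set.notMem_empty x)
        subst hxb
        simp
      · -- only right part
        have hIoc : Set.Ioc b c ⊆ s₂ := fun x hx =>
          ⟨hs.out hbs hc.1 ⟨hx.1.le, hx.2⟩, hx.1⟩
        obtain ⟨hval, _⟩ := right_glue g₂ hc.2 (fun x hx => hg₂ (hIoc hx)) hd
        refine ⟨g₂, fun x hx => ?_⟩
        rcases lt_trichotomy x b with h | h | h
        · exact absurd (show x ∈ s₁ from ⟨hx, h⟩) (h1e ▸ Set.notMem_empty x)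
        · exact h ▸ hval
        · exact hg₂ ⟨hx, h⟩
      · -- only left part
        have hIco : Set.Ico a b ⊆ s₁ := fun x hx =>
          ⟨hs.out ha.1 hbs ⟨hx.1, hx.2.le⟩, hx.2⟩
        obtain ⟨hval, _⟩ := left_glue g₁ ha.2 (fun x hx => hg₁ (hIco hx)) hd
        refine ⟨g₁, fun x hx => ?_⟩
        rcases lt_trichotomy x b with h | h | h
        · exact hg₁ ⟨hx, h⟩
        · exact h ▸ hval
        · exact absurd (show x ∈ s₂ from ⟨hx, h⟩) (h2e ▸ Set.notMem_empty x)
      · -- both sides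
        have hIco : Set.Ico a b ⊆ s₁ := fun x hx =>
          ⟨hs.out ha.1 hbs ⟨hx.1, hx.2.le⟩, hx.2⟩
        have hIoc : Set.Ioc b c ⊆ s₂ := fun x hx =>
          ⟨hs.out hbs hc.1 ⟨hx.1.le, hx.2⟩, hx.1⟩
        obtain ⟨hval₁, hm₁⟩ := left_glue g₁ ha.2 (fun x hx => hg₁ (hIco hx)) hd
        obtain ⟨hval₂, hm₂⟩ := right_glue g₂ hc.2 (fun x hx => hg₂ (hIoc hx)) hd
        have hbeq : g₁ b = g₂ b := by rw [← hval₁, ← hval₂]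
        have h0eq : g₁ 0 = g₂ 0 := by
          have e1 := affine_apply g₁ b
          have e2 := affine_apply g₂ b
          rw [hm₁] at e1
          rw [hm₂] at e2
          rw [hbeq] at e1
          linarith
        have hgeq : ∀ x, g₂ x = g₁ x := by
          intro x
          rw [affine_apply g₁, affine_apply g₂, hm₁, hm₂, h0eq]
        refine ⟨g₁, fun x hx => ?_⟩
        rcases lt_trichotomy x b with h | h | h
        · exact hg₁ ⟨hx, h⟩
        · exact h ▸ hval₁
        · rw [← hgeq x]; exact hg₂ ⟨hx, h⟩


/-- For a ReLU network `f : ℝ → ℝ` with `p` hidden neurons, the set `Φ` of points of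
non-differentiability is finite with at most `2 ^ p - 1` elements, and `f` is affine on
every interval (order-connected set) disjoint from `Φ`. -/
theorem relu_net_one_dim_nondiff_set (hidden : List ℕ) (f : ℝ → ℝ)
    (hf : IsReLUNet1 hidden f) :
    {x : ℝ | ¬ DifferentiableAt ℝ f x}.Finite ∧
    {x : ℝ | ¬ DifferentiableAt ℝ f x}.ncard ≤ 2 ^ hidden.sum - 1 ∧
    ∀ s : Set ℝ, s.OrdConnected → Disjoint s {x : ℝ | ¬ DifferentiableAt ℝ f x} →
      ∃ g : ℝ →ᵃ[ℝ] ℝ, Set.EqOn f (⇑g) s := by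
  have main : ∃ Φ : Set ℝ, Φ.Finite ∧ Φ.ncard ≤ 2 ^ hidden.sum - 1 ∧ PW Φ f := by
    match hidden, hf with
    | [], ⟨A, hA⟩ =>
      exact ⟨∅, Set.finite_empty, by simp, fun s _ _ => ⟨A, fun x _ => by rw [hA]⟩⟩
    | k :: rest, ⟨A, g, hg, hfg⟩ =>
      have hA : PWc ∅ k (fun x => A x) := fun s _ _ => ⟨A, fun x _ => rfl⟩
      obtain ⟨Φ₁, h1f, h1c, h1⟩ := relu_layer k _ ∅ Set.finite_empty hA
      obtain ⟨Φ', hf', hc', hPW⟩ := tail_pw rest k g hg _ Φ₁ h1f h1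
      refine ⟨Φ', hf', ?_, ?_⟩
      · have hb1 : Φ₁.ncard + 1 ≤ 2 ^ k := by simpa using h1c
        have hb2 : Φ'.ncard + 1 ≤ 2 ^ k * 2 ^ rest.sum :=
          le_trans hc' (Nat.mul_le_mul_right _ hb1)
        have hsum : (k :: rest).sum = k + rest.sum := by simp
        rw [hsum, pow_add]
        omega
      · have : f = fun x => g (reluMap k (A x)) := hfg
        rw [this]
        exact hPW
  obtain ⟨Φ, hΦfin, hΦcard, hPW⟩ := main
  have hNsub : {x : ℝ | ¬ DifferentiableAt ℝ f x} ⊆ Φ := by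
    intro x hx
    by_contra hxΦ
    apply hx
    have hop : IsOpen Φᶜ := hΦfin.isClosed.isOpen_compl
    obtain ⟨ε, hε, hball⟩ := Metric.isOpen_iff.mp hop x hxΦ
    have hconn : (Metric.ball x ε).OrdConnected := by
      rw [Real.ball_eq_Ioo]; exact Set.ordConnected_Ioo
    have hdisj : Disjoint (Metric.ball x ε) Φ :=
      Set.disjoint_left.mpr fun {y} hy => hball hy
    obtain ⟨g, hg⟩ := hPW (Metric.ball x ε) hconn hdisj
    have hev : f =ᶠ[nhds x] ⇑g :=
      Filter.eventuallyEq_of_mem (Metric.ball_mem_nhds x hε) hg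
    exact ((affine_hasDerivAt g x).differentiableAt).congr_of_eventuallyEq hev
  refine ⟨hΦfin.subset hNsub, (Set.ncard_le_ncard hNsub hΦfin).trans hΦcard,
    fun s hs hds => ?_⟩
  apply glue f (Φ ∩ s).ncard Φ hΦfin hPW s hs le_rfl
  intro x hx
  by_contra h
  exact Set.disjoint_left.mp hds hx h
end

section
/- Let f : ℝⁿ → ℝᵏ be a function, C ⊆ ℝⁿ a convex set, and g : ℝⁿ → ℝᵏ an affine map with f = g on C. Let A : ℝᵏ → ℝ^{k'} be an affine map and σ : ℝ^{k'} → ℝ^{k'} the coordinatewise ReLU map. Then for every activation pattern s : Fin k' → Bool, the set C_s = C ∩ { x | ∀ i, (s i = true → 0 ≤ (A (g x)) i) ∧ (s i = false → (A (g x)) i < 0) } is convex, σ ∘ A ∘ f agrees with an affine map on C_s, and the sets C_s over all 2^{k'} patterns s cover C. Consequently, applying a ReLU layer with k' neurons to a function that is affine on each of R convex sets covering ℝⁿ yields a function that is affine on each of at most R · 2^{k'} convex sets covering ℝⁿ. -/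
noncomputable def diagMap (k' : ℕ) (s : Fin k' → Bool) :
    EuclideanSpace ℝ (Fin k') →ₗ[ℝ] EuclideanSpace ℝ (Fin k') where
  toFun y := WithLp.toLp 2 (fun i => if s i then y i else 0)
  map_add' a b := by
    ext i; by_cases h : s i <;> simp [h, PiLp.add_apply]
  map_smul' c a := by
    ext i; by_cases h : s i <;> simp [h, PiLp.smul_apply]

lemma main_step (n k k' : ℕ)
    (f : EuclideanSpace ℝ (Fin n) → EuclideanSpace ℝ (Fin k))
    (C : Set (EuclideanSpace ℝ (Fin n))) (hC : Convex ℝ C)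
    (g : EuclideanSpace ℝ (Fin n) →ᵃ[ℝ] EuclideanSpace ℝ (Fin k))
    (hfg : Set.EqOn f (⇑g) C)
    (A : EuclideanSpace ℝ (Fin k) →ᵃ[ℝ] EuclideanSpace ℝ (Fin k')) :
    (∀ s : Fin k' → Bool,
        Convex ℝ (C ∩ {x | ∀ i : Fin k',
          (s i = true → 0 ≤ A (g x) i) ∧ (s i = false → A (g x) i < 0)}) ∧
        ∃ h : EuclideanSpace ℝ (Fin n) →ᵃ[ℝ] EuclideanSpace ℝ (Fin k'),
          Set.EqOn (fun x => reluMap k' (A (f x))) (⇑h)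
            (C ∩ {x | ∀ i : Fin k',
              (s i = true → 0 ≤ A (g x) i) ∧ (s i = false → A (g x) i < 0)})) ∧
      C ⊆ ⋃ s : Fin k' → Bool,
        (C ∩ {x | ∀ i : Fin k',
          (s i = true → 0 ≤ A (g x) i) ∧ (s i = false → A (g x) i < 0)}) := by
  constructor
  · intro s
    constructor
    · -- convexity
      have hset : {x : EuclideanSpace ℝ (Fin n) | ∀ i : Fin k',
          (s i = true → 0 ≤ A (g x) i) ∧ (s i = false → A (g x) i < 0)} =
          ⋂ i : Fin k', {x | (s i = true → 0 ≤ A (g x) i) ∧ (s i = false → A (g x) i < 0)} := by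
        ext x; simp [Set.mem_iInter]
      rw [hset]
      refine hC.inter (convex_iInter fun i => ?_)
      by_cases hsi : s i = true
      case neg =>
        have hsi : s i = false := by simpa using hsi
        have : {x : EuclideanSpace ℝ (Fin n) |
            (s i = true → 0 ≤ A (g x) i) ∧ (s i = false → A (g x) i < 0)} =
            {x | A (g x) i < 0} := by
          ext x; simp [hsi]
        rw [this]
        intro x hx y hy a b ha hb hab
        have hcombo : (A.comp g) (a • x + b • y) = a • (A.comp g) x + b • (A.comp g) y :=
          Convex.combo_affine_apply hab
        simp only [AffineMap.comp_apply] at hcombo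
        have : A (g (a • x + b • y)) i = a * A (g x) i + b * A (g y) i := by
          rw [hcombo]; simp [PiLp.add_apply, PiLp.smul_apply]
        simp only [Set.mem_setOf_eq] at hx hy ⊢
        rw [this]
        rcases eq_or_lt_of_le ha with h | h
        · have hb1 : b = 1 := by linarith
          rw [← h, hb1, zero_mul, one_mul, zero_add]; exact hy
        · nlinarith [mul_neg_of_pos_of_neg h hx, mul_nonpos_of_nonneg_of_nonpos hb hy.le]
      case pos =>
        have : {x : EuclideanSpace ℝ (Fin n) |
            (s i = true → 0 ≤ A (g x) i) ∧ (s i = false → A (g x) i < 0)} =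
            {x | 0 ≤ A (g x) i} := by
          ext x; simp [hsi]
        rw [this]
        intro x hx y hy a b ha hb hab
        have hcombo : (A.comp g) (a • x + b • y) = a • (A.comp g) x + b • (A.comp g) y :=
          Convex.combo_affine_apply hab
        simp only [AffineMap.comp_apply] at hcombo
        have : A (g (a • x + b • y)) i = a * A (g x) i + b * A (g y) i := by
          rw [hcombo]; simp [PiLp.add_apply, PiLp.smul_apply]
        simp only [Set.mem_setOf_eq] at hx hy ⊢
        rw [this]
        exact add_nonneg (mul_nonneg ha hx) (mul_nonneg hb hy)
        
    · -- affine on the piece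
      refine ⟨(diagMap k' s).toAffineMap.comp (A.comp g), ?_⟩
      intro x hx
      obtain ⟨hxC, hxs⟩ := hx
      show reluMap k' (A (f x)) = _
      rw [hfg hxC]
      ext i
      by_cases hsi : s i = true
      · have h1 := (hxs i).1 hsi
        simp [reluMap, diagMap, hsi, AffineMap.comp, max_eq_right h1]
      · have hsi' : s i = false := by simpa using hsi
        have h1 := (hxs i).2 hsi'
        simp [reluMap, diagMap, hsi', AffineMap.comp, max_eq_left (le_of_lt h1)]
  · -- cover
    intro x hx
    refine Set.mem_iUnion.mpr ⟨fun i => decide (0 ≤ A (g x) i), hx, ?_⟩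
    intro i
    constructor
    · intro h; exact of_decide_eq_true h
    · intro h
      have : ¬ (0 ≤ A (g x) i) := of_decide_eq_false h
      exact lt_of_not_ge this

/-- Inductive step for counting linear regions: refining a convex set on which `f` is
affine by the activation patterns of a further ReLU layer yields convex pieces, on each
of which `σ ∘ A ∘ f` is affine, and the pieces cover the original set.  Consequently,
applying a ReLU layer with `k'` neurons to a function affine on each of `R` convex sets
covering `ℝⁿ` yields a function affine on each of at most `R * 2 ^ k'` convex sets
covering `ℝⁿ`. -/
theorem relu_layer_refines_convex_regions (n k k' : ℕ)
    (f : EuclideanSpace ℝ (Fin n) → EuclideanSpace ℝ (Fin k))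
    (C : Set (EuclideanSpace ℝ (Fin n))) (hC : Convex ℝ C)
    (g : EuclideanSpace ℝ (Fin n) →ᵃ[ℝ] EuclideanSpace ℝ (Fin k))
    (hfg : Set.EqOn f (⇑g) C)
    (A : EuclideanSpace ℝ (Fin k) →ᵃ[ℝ] EuclideanSpace ℝ (Fin k')) :
    ((∀ s : Fin k' → Bool,
        Convex ℝ (C ∩ {x | ∀ i : Fin k',
          (s i = true → 0 ≤ A (g x) i) ∧ (s i = false → A (g x) i < 0)}) ∧
        ∃ h : EuclideanSpace ℝ (Fin n) →ᵃ[ℝ] EuclideanSpace ℝ (Fin k'),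
          Set.EqOn (fun x => reluMap k' (A (f x))) (⇑h)
            (C ∩ {x | ∀ i : Fin k',
              (s i = true → 0 ≤ A (g x) i) ∧ (s i = false → A (g x) i < 0)})) ∧
      C ⊆ ⋃ s : Fin k' → Bool,
        (C ∩ {x | ∀ i : Fin k',
          (s i = true → 0 ≤ A (g x) i) ∧ (s i = false → A (g x) i < 0)})) ∧
    -- Consequence: a ReLU layer multiplies the number of convex linear regions by at
    -- most `2 ^ k'`.
    ∀ (f' : EuclideanSpace ℝ (Fin n) → EuclideanSpace ℝ (Fin k)) (R : ℕ)
      (𝒞 : Finset (Set (EuclideanSpace ℝ (Fin n)))),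
      𝒞.card ≤ R →
      (⋃ D ∈ 𝒞, D) = Set.univ →
      (∀ D ∈ 𝒞, Convex ℝ D ∧
        ∃ g' : EuclideanSpace ℝ (Fin n) →ᵃ[ℝ] EuclideanSpace ℝ (Fin k),
          Set.EqOn f' (⇑g') D) →
      ∃ 𝒟 : Finset (Set (EuclideanSpace ℝ (Fin n))),
        𝒟.card ≤ R * 2 ^ k' ∧
        (⋃ D ∈ 𝒟, D) = Set.univ ∧
        ∀ D ∈ 𝒟, Convex ℝ D ∧
          ∃ h : EuclideanSpace ℝ (Fin n) →ᵃ[ℝ] EuclideanSpace ℝ (Fin k'),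
            Set.EqOn (fun x => reluMap k' (A (f' x))) (⇑h) D := by

  refine ⟨main_step n k k' f C hC g hfg A, ?_⟩
  intro f' R 𝒞 hcard hcover hprops
  classical
  choose gD hgD using fun (D : 𝒞) => (hprops D D.2).2
  set piece : 𝒞 → (Fin k' → Bool) → Set (EuclideanSpace ℝ (Fin n)) :=
    fun D s => (D : Set (EuclideanSpace ℝ (Fin n))) ∩ {x | ∀ i : Fin k',
      (s i = true → 0 ≤ A (gD D x) i) ∧ (s i = false → A (gD D x) i < 0)} with hpiece
  refine ⟨Finset.image (fun p : 𝒞 × (Fin k' → Bool) => piece p.1 p.2) Finset.univ,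
    ?_, ?_, ?_⟩
  · calc (Finset.image (fun p : 𝒞 × (Fin k' → Bool) => piece p.1 p.2) Finset.univ).card
        ≤ (Finset.univ : Finset (𝒞 × (Fin k' → Bool))).card := Finset.card_image_le
      _ = 𝒞.card * 2 ^ k' := by
          simp [Finset.card_univ, Fintype.card_coe]
      _ ≤ R * 2 ^ k' := Nat.mul_le_mul_right _ hcard
  · apply Set.eq_univ_of_forall
    intro x
    have hx : x ∈ ⋃ D ∈ 𝒞, D := by rw [hcover]; trivial
    obtain ⟨D, hD, hxD⟩ := Set.mem_iUnion₂.mp hx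
    have hcov := (main_step n k k' f' D (hprops D hD).1 (gD ⟨D, hD⟩)
      (hgD ⟨D, hD⟩) A).2 hxD
    obtain ⟨s, hs⟩ := Set.mem_iUnion.mp hcov
    refine Set.mem_iUnion₂.mpr ⟨piece ⟨D, hD⟩ s, ?_, hs⟩
    exact Finset.mem_image.mpr ⟨(⟨D, hD⟩, s), Finset.mem_univ _, rfl⟩
  · intro E hE
    obtain ⟨⟨D, s⟩, -, rfl⟩ := Finset.mem_image.mp hE
    exact (main_step n k k' f' D (hprops D D.2).1 (gD D) (hgD D) A).1 s
end

section
/- Let g : ℝ → ℝ be a function and let T ⊆ ℝ be a set of cardinality strictly greater than q such that g fails to be differentiable at every point of T. Then g cannot be represented by a shallow ReLU network with q neurons: there are no real parameters aᵢ, wᵢ, bᵢ (i < q) and c with g(x) = c + ∑_{i=0}^{q−1} aᵢ · max(0, wᵢ x + bᵢ) for all x ∈ ℝ. Equivalently, the number of neurons of any shallow ReLU network expressing g is bounded below by the number of points of non-differentiability of g. -/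
/-- A single ReLU neuron is differentiable wherever its pre-activation is nonzero. -/
lemma relu_neuron_diff (w b x : ℝ) (h : w * x + b ≠ 0) :
    DifferentiableAt ℝ (fun y => max 0 (w * y + b)) x := by
  have hc : ContinuousAt (fun y : ℝ => w * y + b) x := by fun_prop
  rcases h.lt_or_gt with hneg | hpos
  · have hev : ∀ᶠ y in nhds x, w * y + b < 0 :=
      hc.eventually_lt continuousAt_const hneg
    have heq : (fun y => max 0 (w * y + b)) =ᶠ[nhds x] (fun _ => (0 : ℝ)) := by
      filter_upwards [hev] with y hy
      exact max_eq_left hy.le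
    exact (differentiableAt_const (0 : ℝ)).congr_of_eventuallyEq heq
  · have hev : ∀ᶠ y in nhds x, 0 < w * y + b :=
      continuousAt_const.eventually_lt hc hpos
    have heq : (fun y => max 0 (w * y + b)) =ᶠ[nhds x] (fun y => w * y + b) := by
      filter_upwards [hev] with y hy
      exact max_eq_right hy.le
    exact (((differentiableAt_fun_id).const_mul w).add_const b).congr_of_eventuallyEq heq

/-- A function `g : ℝ → ℝ` that fails to be differentiable at more than `q` points
cannot be expressed by a shallow ReLU network with `q` neurons. -/
theorem shallow_relu_net_neuron_lower_bound (q : ℕ) (g : ℝ → ℝ) (T : Set ℝ)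
    (hT : (q : ℕ∞) < T.encard)
    (hnd : ∀ x ∈ T, ¬ DifferentiableAt ℝ g x) :
    ¬ ∃ (a w b : Fin q → ℝ) (c : ℝ),
        ∀ x : ℝ, g x = c + ∑ i : Fin q, a i * max 0 (w i * x + b i) := by
  rintro ⟨a, w, b, c, hg⟩
  set S : Set ℝ := Set.range (fun i : Fin q => -(b i) / (w i)) with hS
  have hScard : S.encard ≤ (q : ℕ∞) := by
    have h1 : S = (fun i : Fin q => -(b i) / (w i)) '' Set.univ := by
      rw [Set.image_univ]
    rw [h1]
    calc ((fun i : Fin q => -(b i) / (w i)) '' Set.univ).encard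
        ≤ (Set.univ : Set (Fin q)).encard := Set.encard_image_le _ _
      _ = (q : ℕ∞) := by simp [Set.encard_univ]
  have hx : ∃ x ∈ T, x ∉ S := by
    by_contra hcon
    push_neg at hcon
    have hsub : T ⊆ S := fun x hx => hcon x hx
    exact absurd ((Set.encard_mono hsub).trans hScard) (not_le.mpr hT)
  obtain ⟨x, hxT, hxS⟩ := hx
  apply hnd x hxT
  have hgeq : g = fun y => c + ∑ i : Fin q, a i * max 0 (w i * y + b i) := funext hg
  rw [hgeq]
  apply (differentiableAt_const c).add
  apply DifferentiableAt.fun_sum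
  intro i _
  apply (differentiableAt_const (a i)).mul
  by_cases hw : w i = 0
  · simp only [hw, zero_mul, zero_add]
    exact differentiableAt_const _
  · apply relu_neuron_diff
    intro h0
    apply hxS
    refine ⟨i, ?_⟩
    field_simp
    linarith
end
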